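/- There exists P₀ such that for every prime p ≥ P₀ and all ξ₁, ξ₂ ∈ ℤ/pℤ with ξ₁ ≠ 0, ξ₂ ≠ 0, 9ξ₁² ≠ 4 and 9ξ₂² ≠ 4, there exists y ∈ ℤ/pℤ such that both equations ξ₁² + y² + z² = 3ξ₁yz and ξ₂² + y² + z² = 3ξ₂yz have a solution z ∈ ℤ/pℤ. (Equivalently, in the incidence graph whose vertices are the conic sections C_j(ξ) on the Markoff surface mod p and whose edges are their points of intersection, any two vertices are at distance at most 2, so the incidence graph is connected of diameter 2.) -/

import Mathlib

open Finset

section QuadCount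

variable {F : Type*} [Field F] [Fintype F] [DecidableEq F]

private lemma aux_char_inv (a : F) : quadraticChar F a⁻¹ = quadraticChar F a := by
  by_cases ha : a = 0
  · simp [ha]
  · have h1 : quadraticChar F a⁻¹ * quadraticChar F a = 1 := by
      rw [← map_mul, inv_mul_cancel₀ ha, map_one]
    rcases quadraticChar_dichotomy ha with h | h <;> rw [h] at h1 ⊢ <;> omega

private lemma aux_sum_shift (hF : ringChar F ≠ 2) (b : F) :
    ∑ t : F, quadraticChar F (t + b) = 0 := by
  have h := Equiv.sum_comp (Equiv.addRight b) (quadraticChar F)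
  simp only [Equiv.coe_addRight] at h
  rw [h]
  exact quadraticChar_sum_zero hF

private lemma aux_sum_mul (hF : ringChar F ≠ 2) {b : F} (hb : b ≠ 0) :
    ∑ x : F, quadraticChar F x * quadraticChar F (x + b) = -1 := by
  have key : ∑ x ∈ univ \ {(0 : F)}, quadraticChar F x * quadraticChar F (x + b)
      = ∑ t ∈ univ \ {(1 : F)}, quadraticChar F t := by
    refine sum_nbij' (fun x => 1 + b * x⁻¹) (fun t => b * (t - 1)⁻¹) ?_ ?_ ?_ ?_ ?_
    · intro x hx
      simp only [mem_sdiff, mem_univ, mem_singleton, true_and] at hx ⊢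
      intro h
      have hbx : b * x⁻¹ = 0 := by linear_combination h
      rcases mul_eq_zero.mp hbx with h' | h'
      · exact hb h'
      · exact hx (by simpa using h')
    · intro t ht
      simp only [mem_sdiff, mem_univ, mem_singleton, true_and] at ht ⊢
      intro h
      rcases mul_eq_zero.mp h with h' | h'
      · exact hb h'
      · exact ht (by have := inv_eq_zero.mp h'; linear_combination this)
    · intro x hx
      simp only [mem_sdiff, mem_univ, mem_singleton, true_and] at hx
      field_simp
      simp [hb]
    · intro t ht
      simp only [mem_sdiff, mem_univ, mem_singleton, true_and] at ht
      have ht' : t - 1 ≠ 0 := sub_ne_zero.mpr ht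
      field_simp
      ring
    · intro x hx
      simp only [mem_sdiff, mem_univ, mem_singleton, true_and] at hx
      have hxx : x + b = x * (1 + b * x⁻¹) := by field_simp
      rw [hxx, map_mul, ← mul_assoc, ← pow_two, quadraticChar_sq_one hx, one_mul]
  have h0 : ∑ x : F, quadraticChar F x * quadraticChar F (x + b)
      = ∑ x ∈ univ \ {(0 : F)}, quadraticChar F x * quadraticChar F (x + b) := by
    rw [sum_sdiff_eq_sub (subset_univ _)]
    simp
  have h1 : ∑ t ∈ univ \ {(1 : F)}, quadraticChar F t
      = -1 := by
    rw [sum_sdiff_eq_sub (subset_univ _), quadraticChar_sum_zero hF]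
    simp
  rw [h0, key, h1]

/-- `∑ y, χ(y² + b) = -1` for `b ≠ 0`. -/
private lemma aux_sum_sq_shift (hF : ringChar F ≠ 2) {b : F} (hb : b ≠ 0) :
    ∑ y : F, quadraticChar F (y ^ 2 + b) = -1 := by
  have fib : ∑ y : F, quadraticChar F (y ^ 2 + b)
      = ∑ t : F, ∑ y ∈ univ.filter (fun y : F => y ^ 2 = t), quadraticChar F (y ^ 2 + b) := by
    rw [sum_fiberwise univ (fun y : F => y ^ 2) (fun y => quadraticChar F (y ^ 2 + b))]
  have step : ∀ t : F, ∑ y ∈ univ.filter (fun y : F => y ^ 2 = t), quadraticChar F (y ^ 2 + b)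
      = (quadraticChar F t + 1) * quadraticChar F (t + b) := by
    intro t
    have hcard : ((univ.filter (fun y : F => y ^ 2 = t)).card : ℤ)
        = quadraticChar F t + 1 := by
      have := quadraticChar_card_sqrts hF t
      rw [← this]
      congr 1
      simp [Set.toFinset_setOf]
    calc ∑ y ∈ univ.filter (fun y : F => y ^ 2 = t), quadraticChar F (y ^ 2 + b)
        = ∑ _y ∈ univ.filter (fun y : F => y ^ 2 = t), quadraticChar F (t + b) := by
          apply sum_congr rfl
          intro y hy
          rw [mem_filter] at hy
          rw [hy.2]
      _ = ((univ.filter (fun y : F => y ^ 2 = t)).card : ℤ) * quadraticChar F (t + b) := by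
          rw [sum_const, nsmul_eq_mul]
      _ = (quadraticChar F t + 1) * quadraticChar F (t + b) := by rw [hcard]
  rw [fib]
  simp_rw [step]
  have expand : ∑ t : F, (quadraticChar F t + 1) * quadraticChar F (t + b)
      = (∑ t : F, quadraticChar F t * quadraticChar F (t + b))
        + ∑ t : F, quadraticChar F (t + b) := by
    rw [← sum_add_distrib]
    apply sum_congr rfl
    intro t _
    ring
  rw [expand, aux_sum_mul hF hb, aux_sum_shift hF b]
  norm_num

/-- `∑ y, χ(a y² + c) = -χ(a)` for `a ≠ 0`, `c ≠ 0`. -/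
private lemma aux_sum_quad (hF : ringChar F ≠ 2) {a c : F} (ha : a ≠ 0) (hc : c ≠ 0) :
    ∑ y : F, quadraticChar F (a * y ^ 2 + c) = -quadraticChar F a := by
  have : ∀ y : F, quadraticChar F (a * y ^ 2 + c)
      = quadraticChar F a * quadraticChar F (y ^ 2 + c * a⁻¹) := by
    intro y
    rw [← map_mul]
    congr 1
    have hca : a * (c * a⁻¹) = c := by field_simp
    rw [mul_add, hca]
  simp_rw [this]
  rw [← mul_sum, aux_sum_sq_shift hF (by
    intro h
    rcases mul_eq_zero.mp h with h' | h'
    · exact hc h'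
    · exact ha (inv_eq_zero.mp h'))]
  ring

/-- The count of `y` such that `a y² + c` is a square: `2·#Y = q + 1`. -/
private lemma aux_card_Y (hF : ringChar F ≠ 2) {a c : F} (ha : a ≠ 0) (hc : c ≠ 0)
    (hsq : IsSquare (-c)) :
    2 * (univ.filter (fun y : F => IsSquare (a * y ^ 2 + c))).card = Fintype.card F + 1 := by
  have key : (2 * ((univ.filter (fun y : F => IsSquare (a * y ^ 2 + c))).card : ℤ))
      = ∑ y : F, ((quadraticChar F (a * y ^ 2 + c) + 1)
          + if a * y ^ 2 + c = 0 then 1 else 0) := by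
    rw [card_filter]
    push_cast
    rw [mul_sum]
    apply sum_congr rfl
    intro y _
    by_cases h0 : a * y ^ 2 + c = 0
    · simp [h0]
    · by_cases hsq' : IsSquare (a * y ^ 2 + c)
      · rw [if_pos hsq', if_neg h0, (quadraticChar_one_iff_isSquare h0).mpr hsq']
        ring
      · rw [if_neg hsq', if_neg h0, quadraticChar_neg_one_iff_not_isSquare.mpr hsq']
        ring
  have hk : ∑ y : F, (if a * y ^ 2 + c = 0 then (1 : ℤ) else 0)
      = quadraticChar F a + 1 := by
    have hiff : ∀ y : F, a * y ^ 2 + c = 0 ↔ y ^ 2 = -c * a⁻¹ := by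
      intro y
      constructor
      · intro h; field_simp; linear_combination h
      · intro h; field_simp at h; linear_combination h
    simp_rw [hiff]
    rw [Finset.sum_boole]
    have := quadraticChar_card_sqrts hF (-c * a⁻¹)
    have hset : ((univ.filter (fun y : F => y ^ 2 = -c * a⁻¹)).card : ℤ)
        = quadraticChar F (-c * a⁻¹) + 1 := by
      rw [← this]; congr 1; simp [Set.toFinset_setOf]
    rw [hset, map_mul, aux_char_inv,
      (quadraticChar_one_iff_isSquare (neg_ne_zero.mpr hc)).mpr hsq, one_mul]
  have hint : (2 * ((univ.filter (fun y : F => IsSquare (a * y ^ 2 + c))).card : ℤ))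
      = (Fintype.card F : ℤ) + 1 := by
    rw [key, sum_add_distrib, sum_add_distrib, aux_sum_quad hF ha hc, hk]
    simp only [sum_const, card_univ, nsmul_eq_mul, mul_one]
    ring
  exact_mod_cast hint

end QuadCount

section Markoff

variable {p : ℕ} [Fact p.Prime]

private lemma aux_solvable (hp2 : (2 : ZMod p) ≠ 0) (ξ y : ZMod p)
    (h : IsSquare ((9 * ξ ^ 2 - 4) * y ^ 2 + -(4 * ξ ^ 2))) :
    ∃ z : ZMod p, ξ ^ 2 + y ^ 2 + z ^ 2 = 3 * ξ * y * z := by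
  obtain ⟨u, hu⟩ := h
  refine ⟨(3 * ξ * y + u) * 2⁻¹, ?_⟩
  have h4 : (4 : ZMod p) ≠ 0 := by
    intro h; apply hp2
    have h22 : (2 : ZMod p) * 2 = 0 := by rw [show (2:ZMod p)*2 = 4 by norm_num, h]
    rcases mul_eq_zero.mp h22 with h' | h' <;> exact h'
  have h2i : (2 : ZMod p) * 2⁻¹ = 1 := mul_inv_cancel₀ hp2
  have key : (4 : ZMod p) * ((ξ ^ 2 + y ^ 2 + ((3 * ξ * y + u) * 2⁻¹) ^ 2)
      - 3 * ξ * y * ((3 * ξ * y + u) * 2⁻¹)) = 0 := by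
    linear_combination ((3 * ξ * y + u) ^ 2 * (2 * (2:ZMod p)⁻¹ + 1)
      - 6 * ξ * y * (3 * ξ * y + u)) * h2i - hu
  rcases mul_eq_zero.mp key with h' | h'
  · exact absurd h' h4
  · exact sub_eq_zero.mp h'

end Markoff

theorem markoff_incidence_diameter_two :
    ∃ P₀ : ℕ, ∀ p : ℕ, p.Prime → P₀ ≤ p →
      ∀ ξ₁ ξ₂ : ZMod p, ξ₁ ≠ 0 → ξ₂ ≠ 0 → 9 * ξ₁ ^ 2 ≠ 4 → 9 * ξ₂ ^ 2 ≠ 4 →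
        ∃ y : ZMod p,
          (∃ z : ZMod p, ξ₁ ^ 2 + y ^ 2 + z ^ 2 = 3 * ξ₁ * y * z) ∧
          (∃ z : ZMod p, ξ₂ ^ 2 + y ^ 2 + z ^ 2 = 3 * ξ₂ * y * z) := by
  refine ⟨3, fun p hp hp3 ξ₁ ξ₂ hξ₁ hξ₂ hd₁ hd₂ => ?_⟩
  haveI : Fact p.Prime := ⟨hp⟩
  have hpodd : p ≠ 2 := by omega
  have hF : ringChar (ZMod p) ≠ 2 := by
    rw [ZMod.ringChar_zmod_n]; exact hpodd
  haveI : NeZero p := ⟨hp.pos.ne'⟩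
  have hp2 : (2 : ZMod p) ≠ 0 := by
    intro h
    have h2 : ((2 : ℕ) : ZMod p) = 0 := by exact_mod_cast h
    rw [ZMod.natCast_eq_zero_iff] at h2
    have := Nat.le_of_dvd (by norm_num) h2
    omega
  -- the two sets
  set Y₁ := univ.filter (fun y : ZMod p =>
    IsSquare ((9 * ξ₁ ^ 2 - 4) * y ^ 2 + -(4 * ξ₁ ^ 2))) with hY₁
  set Y₂ := univ.filter (fun y : ZMod p =>
    IsSquare ((9 * ξ₂ ^ 2 - 4) * y ^ 2 + -(4 * ξ₂ ^ 2))) with hY₂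
  have hcard : ∀ (ξ : ZMod p), ξ ≠ 0 → 9 * ξ ^ 2 ≠ 4 →
      2 * (univ.filter (fun y : ZMod p =>
        IsSquare ((9 * ξ ^ 2 - 4) * y ^ 2 + -(4 * ξ ^ 2)))).card = p + 1 := by
    intro ξ hξ hd
    have ha : (9 * ξ ^ 2 - 4 : ZMod p) ≠ 0 := sub_ne_zero.mpr hd
    have hc : (-(4 * ξ ^ 2) : ZMod p) ≠ 0 := by
      simp only [neg_ne_zero]
      intro h
      rcases mul_eq_zero.mp h with h' | h'
      · have h22 : (2 : ZMod p) * 2 = 0 := by linear_combination h'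
        rcases mul_eq_zero.mp h22 with h'' | h'' <;> exact hp2 h''
      · exact hξ (pow_eq_zero_iff (by norm_num)|>.mp h')
    have hsq : IsSquare (-(-(4 * ξ ^ 2)) : ZMod p) := by
      rw [neg_neg]
      exact ⟨2 * ξ, by ring⟩
    have := aux_card_Y hF ha hc hsq
    rwa [ZMod.card] at this
  have h₁ := hcard ξ₁ hξ₁ hd₁
  have h₂ := hcard ξ₂ hξ₂ hd₂
  rw [← hY₁] at h₁
  rw [← hY₂] at h₂
  have hinter : (Y₁ ∩ Y₂).Nonempty := by
    rw [← card_pos]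
    by_contra hcon
    push_neg at hcon
    have h0 : (Y₁ ∩ Y₂).card = 0 := Nat.le_zero.mp hcon
    have hu := card_union_add_card_inter Y₁ Y₂
    have hle : (Y₁ ∪ Y₂).card ≤ p := by
      simpa [card_univ, ZMod.card] using card_le_univ (Y₁ ∪ Y₂)
    omega
  obtain ⟨y, hy⟩ := hinter
  rw [mem_inter, hY₁, hY₂, mem_filter, mem_filter] at hy
  exact ⟨y, aux_solvable hp2 ξ₁ y hy.1.2, aux_solvable hp2 ξ₂ y hy.2.2⟩
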